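/- Worst-case bias bound: Under the bias decomposition hypotheses with R²_ε < 1, the absolute bias satisfies |E_S[w·Y] − E_S[w*·Y]| ≤ sqrt( var_S(Y) · var_S(w) · R²_ε/(1 − R²_ε) ), with equality iff |ρ_{ε,Y}| = 1. -/

import Mathlib

open scoped BigOperators

variable {S : Type*} [Fintype S] [Nonempty S]

/-- Sample mean over the finite sample `S`. -/
noncomputable def mS (f : S → ℝ) : ℝ := (∑ i, f i) / (Fintype.card S : ℝ)

/-- Sample covariance over `S`. -/
noncomputable def covS (f g : S → ℝ) : ℝ := mS (fun i => f i * g i) - mS f * mS g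

/-- Sample variance over `S`. -/
noncomputable def varS (f : S → ℝ) : ℝ := covS f f


lemma covS_centered (f g : S → ℝ) :
    covS f g = mS (fun i => (f i - mS f) * (g i - mS g)) := by
  have hn : (0:ℝ) < (Fintype.card S : ℝ) := by exact_mod_cast Fintype.card_pos
  simp only [covS, mS, sub_mul, mul_sub, Finset.sum_sub_distrib,
    ← Finset.sum_mul, ← Finset.mul_sum]
  field_simp
  have hc : ∑ x : S, (∑ i, f i) / (Fintype.card S : ℝ) = ∑ i, f i := by
    rw [Finset.sum_const, Finset.card_univ, nsmul_eq_mul]; field_simp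
  rw [hc]
  ring

lemma mS_cs (a b : S → ℝ) :
    (mS (fun i => a i * b i))^2 ≤ mS (fun i => a i * a i) * mS (fun i => b i * b i) := by
  have h2 : (∑ i, a i * b i)^2 ≤ (∑ i, a i * a i) * (∑ i, b i * b i) := by
    have h := Finset.sum_mul_sq_le_sq_mul_sq Finset.univ a b
    calc (∑ i, a i * b i)^2 ≤ (∑ i, a i ^ 2) * (∑ i, b i ^ 2) := h
      _ = (∑ i, a i * a i) * (∑ i, b i * b i) := by simp [sq]
  simp only [mS, div_mul_div_comm, div_pow]
  rw [show ((Fintype.card S:ℝ) * (Fintype.card S:ℝ)) = (Fintype.card S:ℝ)^2 from (sq _).symm]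
  gcongr

lemma covS_sq_le (f g : S → ℝ) : (covS f g)^2 ≤ varS f * varS g := by
  simp only [varS]
  rw [covS_centered f g, covS_centered f f, covS_centered g g]
  exact mS_cs _ _

lemma mS_sub (f g : S → ℝ) : mS (fun i => f i - g i) = mS f - mS g := by
  simp [mS, Finset.sum_sub_distrib, sub_div]

lemma covS_comm (f g : S → ℝ) : covS f g = covS g f := by
  simp [covS, mul_comm]

lemma covS_sub_right (f g h : S → ℝ) :
    covS f (fun i => g i - h i) = covS f g - covS f h := by
  have h1 : mS (fun i => f i * (g i - h i))
      = mS (fun i => f i * g i) - mS (fun i => f i * h i) := by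
    simp only [mul_sub]; exact mS_sub _ _
  simp only [covS, h1, mS_sub]
  ring

theorem worst_case_bias_bound (w wstar Y : S → ℝ)
    (hw : mS w = 1) (hws : mS wstar = 1)
    (hproj : covS w (fun i => w i - wstar i) = 0)
    (hvws : 0 < varS wstar)
    (hveps : 0 < varS (fun i => w i - wstar i))
    (hvY : 0 < varS Y)
    (hR2 : varS (fun i => w i - wstar i) / varS wstar < 1) :
    |mS (fun i => w i * Y i) - mS (fun i => wstar i * Y i)|
      ≤ Real.sqrt (varS Y * varS w *
          ((varS (fun i => w i - wstar i) / varS wstar)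
            / (1 - varS (fun i => w i - wstar i) / varS wstar))) ∧
    (|mS (fun i => w i * Y i) - mS (fun i => wstar i * Y i)|
        = Real.sqrt (varS Y * varS w *
            ((varS (fun i => w i - wstar i) / varS wstar)
              / (1 - varS (fun i => w i - wstar i) / varS wstar)))
      ↔ |covS (fun i => w i - wstar i) Y
            / Real.sqrt (varS (fun i => w i - wstar i) * varS Y)| = 1) := by
  set ε : S → ℝ := fun i => w i - wstar i with hε
  -- covS w wstar = varS w
  have hcwws : covS w wstar = varS w := by
    have := hproj
    rw [covS_sub_right] at this
    simp only [varS]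
    linarith
  -- varS ε = varS wstar - varS w
  have hveq : varS ε = varS wstar - varS w := by
    have h1 : covS ε ε = covS ε w - covS ε wstar := by
      have := covS_sub_right ε w wstar
      simpa [hε] using this
    have h2 : covS ε w = covS w w - covS w wstar := by
      rw [covS_comm]; exact covS_sub_right w w wstar
    have h3 : covS ε wstar = covS w wstar - covS wstar wstar := by
      rw [covS_comm]
      have h := covS_sub_right wstar w wstar
      rw [covS_comm wstar w] at h
      simpa [hε] using h
    simp only [varS] at *
    rw [h1, h2, h3, hcwws]
    ring
  have hvw : 0 < varS w := by
    have heps_lt : varS ε < varS wstar := by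
      have := (div_lt_one hvws).mp hR2
      exact this
    linarith
  -- RHS simplification
  have hRHS : varS Y * varS w *
      ((varS ε / varS wstar) / (1 - varS ε / varS wstar))
      = varS Y * varS ε := by
    have h1 : 1 - varS ε / varS wstar = varS w / varS wstar := by
      field_simp
      linarith
    rw [h1]
    field_simp
  -- bias = covS ε Y
  have hmε : mS ε = 0 := by
    rw [hε, mS_sub, hw, hws]; ring
  have hbias : mS (fun i => w i * Y i) - mS (fun i => wstar i * Y i) = covS ε Y := by
    have h1 : mS (fun i => ε i * Y i)
        = mS (fun i => w i * Y i) - mS (fun i => wstar i * Y i) := by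
      simp only [hε, sub_mul]
      exact mS_sub _ _
    simp only [covS, h1, hmε]
    ring
  have hsq : 0 < Real.sqrt (varS ε * varS Y) := by
    apply Real.sqrt_pos.mpr
    positivity
  have hsqeq : Real.sqrt (varS Y * varS ε) = Real.sqrt (varS ε * varS Y) := by
    rw [mul_comm]
  rw [hbias, hRHS, hsqeq]
  constructor
  · -- inequality
    have h := covS_sq_le ε Y
    have := Real.sqrt_le_sqrt h
    rwa [Real.sqrt_sq_eq_abs] at this
  · rw [abs_div, abs_of_pos hsq, div_eq_one_iff_eq hsq.ne']
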